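/- A reduction removes two adjacent equal letters ('OO' or 'UU') from a word over {O,U}. If w' is obtained from a word w of even length by one reduction (deleting two adjacent equal letters), then Φ(w') = Φ(w), where Φ(w) = (1/2)(N^O_e + N^U_o − N^O_o − N^U_e) with positions counted from 1. -/

import Mathlib

inductive Letter : Type
  | O : Letter
  | U : Letter
  deriving DecidableEq, BEq, Repr

open Letter

/-- number of O's in a word -/
def countO (w : List Letter) : ℕ := w.count O

/-- number of U's in a word -/
def countU (w : List Letter) : ℕ := w.count U

/-- number of O's in odd 1-based positions (even 0-based index) -/
def NOo (w : List Letter) : ℕ := ((w.zipIdx.map Prod.swap).filter (fun p => p.1 % 2 == 0 && p.2 == O)).length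

/-- number of O's in even 1-based positions -/
def NOe (w : List Letter) : ℕ := ((w.zipIdx.map Prod.swap).filter (fun p => p.1 % 2 == 1 && p.2 == O)).length

/-- number of U's in odd 1-based positions -/
def NUo (w : List Letter) : ℕ := ((w.zipIdx.map Prod.swap).filter (fun p => p.1 % 2 == 0 && p.2 == U)).length

/-- number of U's in even 1-based positions -/
def NUe (w : List Letter) : ℕ := ((w.zipIdx.map Prod.swap).filter (fun p => p.1 % 2 == 1 && p.2 == U)).length

/-- twice the OU signed quantity: N^O_e + N^U_o − N^O_o − N^U_e -/
def twoPhi (w : List Letter) : ℤ := (NOe w : ℤ) + NUo w - NOo w - NUe w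

/-- the (signed) OU number Φ of a word of even length -/
def Phi (w : List Letter) : ℤ := twoPhi w / 2

/-- cyclic access to the letters of a word -/
def cget (w : List Letter) (i : ℕ) : Letter := w.getD (i % w.length) O

/-- a cyclic occurrence of the factor `OU` at position `i` -/
def OUat (w : List Letter) (i : ℕ) : Prop := cget w i = O ∧ cget w (i + 1) = U

/-- a cyclic occurrence of the factor `UO` at position `i` -/
def UOat (w : List Letter) (i : ℕ) : Prop := cget w i = U ∧ cget w (i + 1) = O

instance (w : List Letter) (i : ℕ) : Decidable (OUat w i) := by unfold OUat; infer_instance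
instance (w : List Letter) (i : ℕ) : Decidable (UOat w i) := by unfold UOat; infer_instance

/-- the cyclic factors at positions `i` and `j` (each occupying `{i, i+1 mod n}`) are disjoint -/
def PairDisjoint (n i j : ℕ) : Prop :=
  i ≠ j ∧ i ≠ (j + 1) % n ∧ (i + 1) % n ≠ j ∧ (i + 1) % n ≠ (j + 1) % n

/-- a word is alternating in the cyclic sense -/
def CyclicAlternating (w : List Letter) : Prop :=
  w.Chain' (· ≠ ·) ∧ ∀ a ∈ w.head?, ∀ b ∈ w.getLast?, a ≠ b

/-- one reduction: delete two adjacent equal letters -/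
def Reduces (w w' : List Letter) : Prop :=
  ∃ a b x, w = a ++ x :: x :: b ∧ w' = a ++ b

/-- `ReducesN k w w'` : `w'` is obtained from `w` by exactly `k` reductions -/
inductive ReducesN : ℕ → List Letter → List Letter → Prop
  | refl (w : List Letter) : ReducesN 0 w w
  | step {k : ℕ} {w w' w'' : List Letter} :
      Reduces w w' → ReducesN k w' w'' → ReducesN (k + 1) w w''

@[simp] lemma beq_OO : (O == O) = true := rfl
@[simp] lemma beq_OU : (O == U) = false := rfl
@[simp] lemma beq_UO : (U == O) = false := rfl
@[simp] lemma beq_UU : (U == U) = true := rfl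

def g (i : ℕ) (l : Letter) : ℤ := if (i % 2 == 1) = (l == O) then 1 else -1

def F : ℕ → List Letter → ℤ
  | _, [] => 0
  | n, l :: t => g n l + F (n + 1) t

lemma g_parity (n : ℕ) (l : Letter) : g (n + 2) l = g n l := by
  simp [g, Nat.add_mod_right]

lemma F_parity (t : List Letter) : ∀ n, F (n + 2) t = F n t := by
  induction t with
  | nil => intro n; rfl
  | cons l t ih =>
      intro n
      show g (n + 2) l + F (n + 3) t = g n l + F (n + 1) t
      rw [g_parity]
      have : F (n + 3) t = F (n + 1) t := ih (n + 1)
      rw [this]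

lemma g_pair (n : ℕ) (x : Letter) : g n x + g (n + 1) x = 0 := by
  rcases Nat.even_or_odd n with he | ho
  · have h0 : n % 2 = 0 := Nat.even_iff.mp he
    have h1 : (n + 1) % 2 = 1 := by omega
    cases x <;> simp [g, h0, h1] <;> decide
  · have h0 : n % 2 = 1 := Nat.odd_iff.mp ho
    have h1 : (n + 1) % 2 = 0 := by omega
    cases x <;> simp [g, h0, h1] <;> decide

lemma F_append (a : List Letter) : ∀ n b, F n (a ++ b) = F n a + F (n + a.length) b := by
  induction a with
  | nil => intro n b; simp [F]
  | cons l t ih =>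
      intro n b
      show g n l + F (n + 1) (t ++ b) = g n l + F (n + 1) t + F (n + (t.length + 1)) b
      rw [ih]
      have : n + 1 + t.length = n + (t.length + 1) := by omega
      rw [this]; ring

lemma twoPhi_enumFrom (w : List Letter) : ∀ n,
    (((((w.zipIdx n).map Prod.swap).filter (fun p => p.1 % 2 == 1 && p.2 == O)).length : ℤ)
      + (((w.zipIdx n).map Prod.swap).filter (fun p => p.1 % 2 == 0 && p.2 == U)).length
      - (((w.zipIdx n).map Prod.swap).filter (fun p => p.1 % 2 == 0 && p.2 == O)).length
      - (((w.zipIdx n).map Prod.swap).filter (fun p => p.1 % 2 == 1 && p.2 == U)).length)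
    = F n w := by
  induction w with
  | nil => intro n; simp [F]
  | cons l t ih =>
      intro n
      have h := ih (n + 1)
      rcases Nat.even_or_odd n with he | ho
      · have h0 : n % 2 = 0 := Nat.even_iff.mp he
        cases l <;>
          · simp [List.zipIdx, List.map, List.filter, h0, F, g, ← h]
            push_cast
            ring
      · have h0 : n % 2 = 1 := Nat.odd_iff.mp ho
        cases l <;>
          · simp [List.zipIdx, List.map, List.filter, h0, F, g, ← h]
            push_cast
            ring

lemma twoPhi_eq_F (w : List Letter) : twoPhi w = F 0 w := by
  have := twoPhi_enumFrom w 0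
  simpa [twoPhi, NOe, NUo, NOo, NUe] using this

theorem stmt5 (w w' : List Letter) (h : Even w.length) (hr : Reduces w w') :
    Phi w' = Phi w := by
  obtain ⟨a, b, x, hw, hw'⟩ := hr
  have key : twoPhi w' = twoPhi w := by
    rw [hw, hw', twoPhi_eq_F, twoPhi_eq_F, F_append, F_append]
    have : F (0 + a.length) (x :: x :: b) = F (0 + a.length) b := by
      show g _ x + (g _ x + F (0 + a.length + 1 + 1) b) = _
      have hp := g_pair (0 + a.length) x
      have hF : F (0 + a.length + 1 + 1) b = F (0 + a.length) b := F_parity b _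
      rw [hF]
      linarith
    rw [this]
  simp [Phi, key]
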